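/- Fix Seifert data and assume the numerically Gorenstein congruence conditions: γ ∈ ℤ and ωᵢ·γ ≡ 1 (mod αᵢ) for every i = 1,…,d. Then N(ℓ) + N(γ − ℓ) = −2 for every integer ℓ. -/

import Mathlib

lemma ceil_int_div (a n : ℤ) (hn : 0 < n) : ⌈(a:ℚ)/(n:ℚ)⌉ = -((-a) / n) := by
  rw [show ((a:ℚ))/(n:ℚ) = -((((-a : ℤ)):ℚ)/(n:ℚ)) by push_cast; ring, Int.ceil_neg]
  congr 1
  have : (n:ℚ) = ((n.toNat : ℕ) : ℚ) := by
    exact_mod_cast (Int.toNat_of_nonneg hn.le).symm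
  rw [this, Rat.floor_intCast_div_natCast, Int.toNat_of_nonneg hn.le]

lemma ceil_pair (a b n : ℤ) (hn : 0 < n) (hdvd : n ∣ a + b - 1) :
    ⌈(a:ℚ)/(n:ℚ)⌉ + ⌈(b:ℚ)/(n:ℚ)⌉ = (a + b - 1) / n + 1 := by
  rw [ceil_int_div a n hn, ceil_int_div b n hn]
  obtain ⟨k, hk⟩ := hdvd
  have h1 := Int.mul_ediv_add_emod (-a) n
  have h2 := Int.mul_ediv_add_emod (-b) n
  have h1' := Int.emod_nonneg (-a) hn.ne'
  have h2' := Int.emod_nonneg (-b) hn.ne'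
  have h1'' := Int.emod_lt_of_pos (-a) hn
  have h2'' := Int.emod_lt_of_pos (-b) hn
  have hq : (a + b - 1) / n = k := by rw [hk]; exact Int.mul_ediv_cancel_left _ hn.ne'
  rw [hq]
  set q1 := (-a) / n with hq1
  set q2 := (-b) / n with hq2
  set r1 := (-a) % n with hr1
  set r2 := (-b) % n with hr2
  have hs : r1 + r2 + 1 = n * (-(k + q1 + q2)) := by
    linarith [mul_add n q1 q2, mul_neg n (k+q1+q2), mul_add n (k+q1) q2, mul_add n k q1]
  set m := -(k + q1 + q2) with hm
  have hm1 : 1 ≤ m := by nlinarith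
  have hm2 : m ≤ 1 := by nlinarith
  have : m = 1 := le_antisymm hm2 hm1
  rw [hm] at this
  linarith

theorem stmt_1
    (d : ℕ) (hd : 3 ≤ d) (b₀ : ℤ)
    (α ω : Fin d → ℤ)
    (hω : ∀ i, 0 < ω i ∧ ω i < α i)
    (hcop : ∀ i, IsCoprime (α i) (ω i))
    (e : ℚ) (he : e = -(b₀ : ℚ) + ∑ i, (ω i : ℚ) / (α i : ℚ)) (heneg : e < 0)
    (N : ℤ → ℤ)
    (hN : ∀ ℓ : ℤ, N ℓ = b₀ * ℓ - ∑ i, ⌈((ℓ * ω i : ℤ) : ℚ) / ((α i : ℤ) : ℚ)⌉)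
    (γ : ℤ)
    (hγ : (γ : ℚ) = ((d : ℚ) - 2 - ∑ i, 1 / (α i : ℚ)) / |e|)
    (hGor : ∀ i, α i ∣ ω i * γ - 1) :
    ∀ ℓ : ℤ, N ℓ + N (γ - ℓ) = -2 := by
  intro ℓ
  have hαpos : ∀ i, 0 < α i := fun i => lt_trans (hω i).1 (hω i).2
  have hαQ : ∀ i, (α i : ℚ) ≠ 0 := fun i => Int.cast_ne_zero.mpr (hαpos i).ne'
  have key : ∀ i : Fin d,
      ⌈((ℓ * ω i : ℤ) : ℚ) / ((α i : ℤ) : ℚ)⌉ + ⌈(((γ - ℓ) * ω i : ℤ) : ℚ) / ((α i : ℤ) : ℚ)⌉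
        = (ω i * γ - 1) / α i + 1 := by
    intro i
    have h := ceil_pair (ℓ * ω i) ((γ - ℓ) * ω i) (α i) (hαpos i)
      (by rw [show ℓ * ω i + (γ - ℓ) * ω i - 1 = ω i * γ - 1 by ring]; exact hGor i)
    rw [h]
    congr 1
    congr 1
    ring
  -- sum identity
  have hsum : N ℓ + N (γ - ℓ) = b₀ * γ - (∑ i, (ω i * γ - 1) / α i) - d := by
    rw [hN ℓ, hN (γ - ℓ)]
    have : (∑ i, ⌈((ℓ * ω i : ℤ) : ℚ) / ((α i : ℤ) : ℚ)⌉)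
         + (∑ i, ⌈(((γ - ℓ) * ω i : ℤ) : ℚ) / ((α i : ℤ) : ℚ)⌉)
         = ∑ i, ((ω i * γ - 1) / α i + 1) := by
      rw [← Finset.sum_add_distrib]
      exact Finset.sum_congr rfl fun i _ => key i
    rw [Finset.sum_add_distrib] at this
    simp only [Finset.sum_const, Finset.card_univ, Fintype.card_fin, nsmul_eq_mul, mul_one] at this
    have hd' : ((Finset.univ : Finset (Fin d)).card : ℤ) = d := by simp
    linarith [this, mul_sub b₀ γ ℓ]
  rw [hsum]
  -- now prove integer identity by casting to ℚ
  have hterm : ∀ i : Fin d, (((ω i * γ - 1) / α i : ℤ) : ℚ) = ((ω i : ℚ) * γ - 1) / (α i : ℚ) := by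
    intro i
    rw [Int.cast_div_charZero (hGor i)]
    push_cast
    ring
  have hQ : ((b₀ * γ - (∑ i, (ω i * γ - 1) / α i) - d : ℤ) : ℚ) = -2 := by
    rw [Int.cast_sub, Int.cast_sub, Int.cast_mul, Int.cast_sum]
    simp only [hterm]
    have hsplit : ∑ i : Fin d, ((ω i : ℚ) * γ - 1) / (α i : ℚ)
        = (γ : ℚ) * (∑ i, (ω i : ℚ) / (α i : ℚ)) - ∑ i, 1 / (α i : ℚ) := by
      rw [Finset.mul_sum, ← Finset.sum_sub_distrib]
      refine Finset.sum_congr rfl fun i _ => ?_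
      field_simp
    rw [hsplit]
    have habs : |e| = -e := abs_of_neg heneg
    have hγ' : (γ : ℚ) * (-e) = (d : ℚ) - 2 - ∑ i, 1 / (α i : ℚ) := by
      have hene : e ≠ 0 := ne_of_lt heneg
      rw [hγ, habs]
      field_simp
    linear_combination (γ : ℚ) * he + hγ'
  exact_mod_cast hQ
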